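/- For every n ≥ 2, the power graph of the generalised quaternion group Q_{2^{n+1}} equals its enhanced power graph and also equals its commuting graph: distinct elements x, y of Q_{2^{n+1}} commute if and only if one is a power of the other. -/

import Mathlib

/-- The power graph of a group: distinct `x`, `y` are adjacent iff one is a power of the other. -/
def powerGraph (G : Type*) [Group G] : SimpleGraph G where
  Adj x y := x ≠ y ∧ ((∃ k : ℤ, x = y ^ k) ∨ (∃ k : ℤ, y = x ^ k))
  symm := by
    constructor
    rintro x y ⟨hne, h | h⟩
    · exact ⟨hne.symm, Or.inr h⟩
    · exact ⟨hne.symm, Or.inl h⟩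
  loopless := by constructor; rintro x ⟨hne, -⟩; exact hne rfl

/-- The commuting graph of a group: distinct `x`, `y` are adjacent iff they commute. -/
def commutingGraph (G : Type*) [Group G] : SimpleGraph G where
  Adj x y := x ≠ y ∧ x * y = y * x
  symm := by constructor; rintro x y ⟨hne, h⟩; exact ⟨hne.symm, h.symm⟩
  loopless := by constructor; rintro x ⟨hne, -⟩; exact hne rfl

/-- The enhanced power graph of a group: distinct `x`, `y` are adjacent iff `⟨x, y⟩` is cyclic. -/
def enhancedPowerGraph (G : Type*) [Group G] : SimpleGraph G where
  Adj x y := x ≠ y ∧ IsCyclic ↥(Subgroup.closure {x, y})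
  symm := by constructor; rintro x y ⟨hne, h⟩; rw [Set.pair_comm] at h; exact ⟨hne.symm, h⟩
  loopless := by constructor; rintro x ⟨hne, -⟩; exact hne rfl



section Aux

open QuaternionGroup

private lemma mul_int_of_gcd_dvd' (N : ℕ) [NeZero N] (b : ZMod N) (c : ℕ)
    (h : Nat.gcd b.val N ∣ c) : ∃ k : ℤ, (c : ZMod N) = (k : ZMod N) * b := by
  obtain ⟨t, rfl⟩ := h
  refine ⟨Nat.gcdA b.val N * t, ?_⟩
  have hg : ((Nat.gcd b.val N : ℤ) : ZMod N) = (Nat.gcdA b.val N : ZMod N) * b := by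
    rw [Nat.gcd_eq_gcd_ab]
    push_cast
    rw [ZMod.natCast_self, ZMod.natCast_val, ZMod.cast_id]
    ring
  push_cast
  push_cast at hg
  rw [hg]; ring

private lemma comparable_zmod' (N e : ℕ) (hN : N = 2 ^ e) [NeZero N] (x y : ZMod N) :
    (∃ k : ℤ, x = (k : ZMod N) * y) ∨ (∃ k : ℤ, y = (k : ZMod N) * x) := by
  have hx : Nat.gcd x.val N ∣ 2 ^ e := hN ▸ Nat.gcd_dvd_right _ _
  have hy : Nat.gcd y.val N ∣ 2 ^ e := hN ▸ Nat.gcd_dvd_right _ _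
  obtain ⟨i, hi, hgx⟩ := (Nat.dvd_prime_pow Nat.prime_two).1 hx
  obtain ⟨j, hj, hgy⟩ := (Nat.dvd_prime_pow Nat.prime_two).1 hy
  rcases le_total i j with hij | hij
  · right
    obtain ⟨k, hk⟩ := mul_int_of_gcd_dvd' N x y.val
      (by rw [hgx]; exact dvd_trans (pow_dvd_pow 2 hij) (hgy ▸ Nat.gcd_dvd_left _ _))
    exact ⟨k, by rwa [ZMod.natCast_val, ZMod.cast_id] at hk⟩
  · left
    obtain ⟨k, hk⟩ := mul_int_of_gcd_dvd' N y x.val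
      (by rw [hgy]; exact dvd_trans (pow_dvd_pow 2 hij) (hgx ▸ Nat.gcd_dvd_left _ _))
    exact ⟨k, by rwa [ZMod.natCast_val, ZMod.cast_id] at hk⟩

private lemma a_zpow' (m : ℕ) (k : ℤ) (i : ZMod (2 * m)) :
    (a i : QuaternionGroup m) ^ k = a ((k : ZMod (2 * m)) * i) := by
  have hnat : ∀ (l : ℕ) (i : ZMod (2 * m)),
      (a i : QuaternionGroup m) ^ l = a ((l : ZMod (2*m)) * i) := by
    intro l i
    induction l with
    | zero => rw [pow_zero, Nat.cast_zero, zero_mul, one_def]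
    | succ l ih => rw [pow_succ, ih, a_mul_a]; push_cast; ring_nf
  obtain ⟨l, rfl | rfl⟩ := k.eq_nat_or_neg
  · rw [zpow_natCast, hnat]; norm_cast
  · rw [zpow_neg, zpow_natCast, hnat]
    have hainv : ∀ j : ZMod (2 * m), (a j : QuaternionGroup m)⁻¹ = a (-j) := by
      intro j
      refine inv_eq_of_mul_eq_one_right ?_
      rw [a_mul_a, add_neg_cancel, one_def]
    rw [hainv]
    push_cast
    ring_nf

private lemma double_eq_zero' (m : ℕ) [NeZero m] (i : ZMod (2 * m)) (h : i + i = 0) :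
    i = 0 ∨ i = (m : ZMod (2 * m)) := by
  have hm : 0 < m := Nat.pos_of_ne_zero (NeZero.ne m)
  have h2m : NeZero (2 * m) := ⟨by omega⟩
  have hi : ((i.val + i.val : ℕ) : ZMod (2 * m)) = 0 := by
    push_cast
    rwa [ZMod.natCast_val, ZMod.cast_id]
  have hdvd : 2 * m ∣ i.val + i.val := (ZMod.natCast_eq_zero_iff _ _).1 hi
  obtain ⟨t, ht⟩ := hdvd
  have hvt : i.val = m * t := by
    have h' : i.val + i.val = m * t + m * t := by rw [ht]; ring
    linarith
  have hlt : i.val < 2 * m := ZMod.val_lt i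
  have ht2 : t < 2 := by
    rcases Nat.lt_or_ge t 2 with h' | h'
    · exact h'
    · exfalso; nlinarith
  have hival : ((i.val : ℕ) : ZMod (2 * m)) = i := by rw [ZMod.natCast_val, ZMod.cast_id]
  interval_cases t
  · left
    rw [← hival, hvt]; push_cast; ring
  · right
    rw [← hival, hvt]; push_cast; ring

private lemma m_add_m' (m : ℕ) : (m : ZMod (2 * m)) + m = 0 := by
  have : ((m + m : ℕ) : ZMod (2 * m)) = 0 := by
    rw [show m + m = 2 * m by ring, ZMod.natCast_self]
  rwa [Nat.cast_add] at this

private lemma quat_key_m (m e : ℕ) [NeZero m] (he : 2 * m = 2 ^ e)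
    (x y : QuaternionGroup m)
    (hxy : x ≠ y) (hc : x * y = y * x) :
    (∃ k : ℤ, x = y ^ k) ∨ (∃ k : ℤ, y = x ^ k) := by
  have hm : 0 < m := Nat.pos_of_ne_zero (NeZero.ne m)
  have h2m : NeZero (2 * m) := ⟨by omega⟩
  have h2mpow : 2 * m = 2 ^ e := he
  rcases x with i | i <;> rcases y with j | j
  · -- both rotations
    rcases comparable_zmod' (2 * m) e h2mpow i j with ⟨k, hk⟩ | ⟨k, hk⟩
    · exact Or.inl ⟨k, by rw [a_zpow']; exact congrArg a hk⟩
    · exact Or.inr ⟨k, by rw [a_zpow']; exact congrArg a hk⟩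
  · -- a i, xa j
    rw [a_mul_xa, xa_mul_a] at hc
    have h2 : i + i = 0 := by
      have := xa.inj hc
      linear_combination -this
    rcases double_eq_zero' m i h2 with h0 | hmm
    · exact Or.inl ⟨0, by rw [h0, zpow_zero, one_def]⟩
    · refine Or.inl ⟨(2 : ℕ), ?_⟩
      rw [zpow_natCast, xa_sq]
      exact congrArg a hmm
  · -- xa i, a j
    rw [a_mul_xa, xa_mul_a] at hc
    have h2 : j + j = 0 := by
      have := xa.inj hc
      linear_combination this
    rcases double_eq_zero' m j h2 with h0 | hmm
    · exact Or.inr ⟨0, by rw [h0, zpow_zero, one_def]⟩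
    · refine Or.inr ⟨(2 : ℕ), ?_⟩
      rw [zpow_natCast, xa_sq]
      exact congrArg a hmm
  · -- xa i, xa j
    rw [xa_mul_xa, xa_mul_xa] at hc
    have h2 : (i - j) + (i - j) = 0 := by
      have := a.inj hc
      linear_combination -this
    rcases double_eq_zero' m (i - j) h2 with h0 | hmm
    · exact absurd (congrArg xa (by linear_combination h0 : i = j)) hxy
    · refine Or.inl ⟨(3 : ℕ), ?_⟩
      rw [zpow_natCast, pow_succ, xa_sq, a_mul_xa]
      refine congrArg xa ?_
      have := m_add_m' m
      linear_combination hmm + this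

end Aux


private lemma zpowers_isCyclic'' {G : Type*} [Group G] (g : G) :
    IsCyclic ↥(Subgroup.zpowers g) := by
  refine ⟨⟨⟨g, Subgroup.mem_zpowers g⟩, ?_⟩⟩
  rintro ⟨x, hx⟩
  obtain ⟨k, hk⟩ := Subgroup.mem_zpowers_iff.1 hx
  exact Subgroup.mem_zpowers_iff.2 ⟨k, Subtype.ext (by simpa using hk)⟩

private lemma cyclic_pair_of_zpow'' {G : Type*} [Group G] (y : G) (k : ℤ) :
    IsCyclic ↥(Subgroup.closure ({y ^ k, y} : Set G)) := by
  have hcl : Subgroup.closure ({y ^ k, y} : Set G) = Subgroup.zpowers y := by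
    apply le_antisymm
    · rw [Subgroup.closure_le]
      rintro z (rfl | rfl)
      · exact Subgroup.mem_zpowers_iff.2 ⟨k, rfl⟩
      · exact Subgroup.mem_zpowers _
    · rw [Subgroup.zpowers_eq_closure]
      exact Subgroup.closure_mono (by simp)
  rw [hcl]
  exact zpowers_isCyclic'' y

private lemma cyclic_imp_comm'' {G : Type*} [Group G] (x y : G)
    (h : IsCyclic ↥(Subgroup.closure ({x, y} : Set G))) : x * y = y * x := by
  obtain ⟨g, hgen⟩ := h.exists_generator
  have hx : x ∈ Subgroup.closure ({x, y} : Set G) := Subgroup.subset_closure (by simp)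
  have hy : y ∈ Subgroup.closure ({x, y} : Set G) := Subgroup.subset_closure (by simp)
  obtain ⟨k, hk⟩ := Subgroup.mem_zpowers_iff.1 (hgen ⟨x, hx⟩)
  obtain ⟨l, hl⟩ := Subgroup.mem_zpowers_iff.1 (hgen ⟨y, hy⟩)
  have hkx : (g : G) ^ k = x := by simpa using congrArg Subtype.val hk
  have hly : (g : G) ^ l = y := by simpa using congrArg Subtype.val hl
  have hcomm : (g : G) ^ k * (g : G) ^ l = (g : G) ^ l * (g : G) ^ k := by
    rw [← zpow_add, ← zpow_add, add_comm]
  rw [hkx, hly] at hcomm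
  exact hcomm

/-- For n ≥ 2, the power graph, enhanced power graph and commuting graph of `Q_{2^(n+1)}`
all coincide: distinct elements commute iff one is a power of the other. -/
theorem stmt11 (n : ℕ) (hn : 2 ≤ n) :
    powerGraph (QuaternionGroup (2 ^ (n - 1)))
        = enhancedPowerGraph (QuaternionGroup (2 ^ (n - 1))) ∧
      enhancedPowerGraph (QuaternionGroup (2 ^ (n - 1)))
        = commutingGraph (QuaternionGroup (2 ^ (n - 1))) ∧
      (∀ x y : QuaternionGroup (2 ^ (n - 1)), x ≠ y →
        (x * y = y * x ↔ (∃ k : ℤ, x = y ^ k) ∨ (∃ k : ℤ, y = x ^ k))) := by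
  have hmz : NeZero (2 ^ (n - 1)) := ⟨by positivity⟩
  have he : 2 * 2 ^ (n - 1) = 2 ^ n := by
    rw [← pow_succ']
    congr 1
    omega
  have key : ∀ x y : QuaternionGroup (2 ^ (n - 1)), x ≠ y → x * y = y * x →
      ((∃ k : ℤ, x = y ^ k) ∨ (∃ k : ℤ, y = x ^ k)) :=
    fun x y hne hc => quat_key_m _ n he x y hne hc
  have pc : ∀ x y : QuaternionGroup (2 ^ (n - 1)),
      ((∃ k : ℤ, x = y ^ k) ∨ (∃ k : ℤ, y = x ^ k)) →
      IsCyclic ↥(Subgroup.closure ({x, y} : Set (QuaternionGroup (2 ^ (n - 1))))) := by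
    rintro x y (⟨k, rfl⟩ | ⟨k, rfl⟩)
    · exact cyclic_pair_of_zpow'' y k
    · rw [Set.pair_comm]
      exact cyclic_pair_of_zpow'' x k
  have pcomm : ∀ x y : QuaternionGroup (2 ^ (n - 1)),
      ((∃ k : ℤ, x = y ^ k) ∨ (∃ k : ℤ, y = x ^ k)) → x * y = y * x := by
    rintro x y (⟨k, rfl⟩ | ⟨k, rfl⟩)
    · exact ((Commute.refl y).zpow_left k).eq
    · exact ((Commute.refl x).zpow_right k).eq
  refine ⟨?_, ?_, fun x y hne => ⟨key x y hne, pcomm x y⟩⟩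
  · ext x y
    show (x ≠ y ∧ _) ↔ (x ≠ y ∧ _)
    constructor
    · rintro ⟨hne, h⟩
      exact ⟨hne, pc x y h⟩
    · rintro ⟨hne, h⟩
      exact ⟨hne, key x y hne (cyclic_imp_comm'' x y h)⟩
  · ext x y
    show (x ≠ y ∧ _) ↔ (x ≠ y ∧ _)
    constructor
    · rintro ⟨hne, h⟩
      exact ⟨hne, cyclic_imp_comm'' x y h⟩
    · rintro ⟨hne, h⟩
      exact ⟨hne, pc x y (key x y hne h)⟩
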